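/- For fixed μ > 0 and λ ∈ (0, μ), the equation s·log(μ/(μ−λ)) = sup_{0≤r<t} {(t−r)(λ²/2 − μλ) + Λ_{s,t−r}(λ)} ∨ sup_{0≤u<s} {t(λ²/2 − μλ) + u·log(μ/(μ−λ)) + Λ_{s−u,t}(λ)} holds for all s, t > 0, where Λ_{s,t}(λ) := min_{z>0}{t(λ²/2 + zλ) + s·log((z+λ)/z)} for s,t > 0 extended by Λ_{s,0}(λ) = 0 and Λ_{0,t}(λ) = λ²t/2. -/

import Mathlib

/-- The point-to-point Lyapunov exponent `Λ_{s,t}(λ)` of Brownian directed percolation,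
as the variational (minimal) value, extended by `Λ_{0,t}(λ) = λ²t/2` and `Λ_{s,0}(λ) = 0`. -/
noncomputable def Lam (s t lam : ℝ) : ℝ :=
  if s = 0 then lam ^ 2 * t / 2
  else if t = 0 then 0
  else sInf {y : ℝ | ∃ z > 0, y = t * (lam ^ 2 / 2 + z * lam) + s * Real.log ((z + lam) / z)}

lemma Lam_pos_def (s t lam : ℝ) (hs : s ≠ 0) (ht : t ≠ 0) :
    Lam s t lam =
      sInf {y : ℝ | ∃ z > 0, y = t * (lam ^ 2 / 2 + z * lam) + s * Real.log ((z + lam) / z)} := by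
  simp [Lam, hs, ht]

lemma log_gt_pos (lam z : ℝ) (hlam : 0 < lam) (hz : 0 < z) :
    0 < Real.log ((z + lam) / z) :=
  Real.log_pos <| (one_lt_div hz).mpr (by linarith)

lemma Lam_le (μ lam s τ z : ℝ) (hlam : 0 < lam) (hs : 0 < s) (hτ : 0 < τ) (hz : 0 < z) :
    Lam s τ lam ≤ τ * (lam ^ 2 / 2 + z * lam) + s * Real.log ((z + lam) / z) := by
  rw [Lam_pos_def _ _ _ hs.ne' hτ.ne']
  apply csInf_le
  · refine ⟨τ * (lam ^ 2 / 2), ?_⟩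
    rintro y ⟨w, hw, rfl⟩
    have h1 : 0 < Real.log ((w + lam) / w) := log_gt_pos lam w hlam hw
    nlinarith [mul_pos hτ (mul_pos hw hlam), mul_pos hs h1]
  · exact ⟨z, hz, rfl⟩

/-- Core inequality: `z = μ - lam` minimizes the variational functional when `s = τ μ (μ-lam)`. -/
lemma core_ineq (μ lam z τ s : ℝ) (hlam : 0 < lam) (hd : 0 < μ - lam) (hz : 0 < z)
    (hτ : 0 < τ) (hs : s = τ * (μ * (μ - lam))) :
    τ * (lam ^ 2 / 2 + (μ - lam) * lam) + s * Real.log (μ / (μ - lam)) ≤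
      τ * (lam ^ 2 / 2 + z * lam) + s * Real.log ((z + lam) / z) := by
  have hμ : 0 < μ := by linarith
  have hzl : 0 < z + lam := by linarith
  set A : ℝ := μ * z / ((μ - lam) * (z + lam)) with hA
  have hApos : 0 < A := by positivity
  have hlog : Real.log A ≤ A - 1 := Real.log_le_sub_one_of_pos hApos
  have hlogeq : Real.log (μ / (μ - lam)) - Real.log ((z + lam) / z) = Real.log A := by
    rw [hA, Real.log_div hμ.ne' hd.ne', Real.log_div hzl.ne' hz.ne',
      Real.log_div (by positivity) (by positivity), Real.log_mul hμ.ne' hz.ne',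
      Real.log_mul hd.ne' hzl.ne']
    ring
  have hspos : 0 < s := by rw [hs]; positivity
  -- reduce to: s * (log(μ/(μ-lam)) - log((z+lam)/z)) ≤ τ * lam * (z - (μ - lam))
  have key : s * (Real.log (μ / (μ - lam)) - Real.log ((z + lam) / z)) ≤
      τ * lam * (z - (μ - lam)) := by
    rw [hlogeq]
    have h1 : s * Real.log A ≤ s * (A - 1) := by
      exact mul_le_mul_of_nonneg_left (by linarith) hspos.le
    refine h1.trans ?_
    have hA1 : A - 1 = lam * (z - (μ - lam)) / ((μ - lam) * (z + lam)) := by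
      rw [hA]; field_simp; ring
    rw [hA1, hs, ← mul_div_assoc, div_le_iff₀ (by positivity)]
    nlinarith [mul_nonneg (mul_nonneg (mul_pos hτ hlam).le hd.le) (sq_nonneg (z - (μ - lam)))]
  nlinarith [key]

lemma Lam_eq (μ lam s τ : ℝ) (hlam : 0 < lam) (hd : 0 < μ - lam) (hs : 0 < s) (hτ : 0 < τ)
    (hsc : s = τ * (μ * (μ - lam))) :
    Lam s τ lam = τ * (lam ^ 2 / 2 + (μ - lam) * lam) + s * Real.log (μ / (μ - lam)) := by
  have hμ : 0 < μ := by linarith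
  have heq : (μ - lam + lam) / (μ - lam) = μ / (μ - lam) := by ring_nf
  apply le_antisymm
  · have := Lam_le μ lam s τ (μ - lam) hlam hs hτ hd
    rwa [heq] at this
  · rw [Lam_pos_def _ _ _ hs.ne' hτ.ne']
    apply le_csInf
    · exact ⟨_, 1, one_pos, rfl⟩
    · rintro y ⟨z, hz, rfl⟩
      exact core_ineq μ lam z τ s hlam hd hz hτ hsc

theorem burke_variational_identity (μ lam : ℝ) (hμ : 0 < μ) (hlam : 0 < lam)
    (hlt : lam < μ) :
    ∀ s t : ℝ, 0 < s → 0 < t →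
      s * Real.log (μ / (μ - lam)) =
        max
          (sSup {y : ℝ | ∃ r ∈ Set.Ico (0:ℝ) t,
            y = (t - r) * (lam ^ 2 / 2 - μ * lam) + Lam s (t - r) lam})
          (sSup {y : ℝ | ∃ u ∈ Set.Ico (0:ℝ) s,
            y = t * (lam ^ 2 / 2 - μ * lam) + u * Real.log (μ / (μ - lam)) +
              Lam (s - u) t lam}) := by
  intro s t hs ht
  have hd : 0 < μ - lam := by linarith
  set L : ℝ := Real.log (μ / (μ - lam)) with hL
  have heq : (μ - lam + lam) / (μ - lam) = μ / (μ - lam) := by ring_nf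
  set c : ℝ := μ * (μ - lam) with hc
  have hcpos : 0 < c := by positivity
  set S1 := {y : ℝ | ∃ r ∈ Set.Ico (0:ℝ) t,
      y = (t - r) * (lam ^ 2 / 2 - μ * lam) + Lam s (t - r) lam} with hS1
  set S2 := {y : ℝ | ∃ u ∈ Set.Ico (0:ℝ) s,
      y = t * (lam ^ 2 / 2 - μ * lam) + u * L + Lam (s - u) t lam} with hS2
  -- upper bounds
  have ub1 : ∀ y ∈ S1, y ≤ s * L := by
    rintro y ⟨r, ⟨hr0, hrt⟩, rfl⟩
    have hτ : 0 < t - r := by linarith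
    have h := Lam_le μ lam s (t - r) (μ - lam) hlam hs hτ hd
    rw [heq, ← hL] at h
    nlinarith [h]
  have ub2 : ∀ y ∈ S2, y ≤ s * L := by
    rintro y ⟨u, ⟨hu0, hus⟩, rfl⟩
    have hsu : 0 < s - u := by linarith
    have h := Lam_le μ lam (s - u) t (μ - lam) hlam hsu ht hd
    rw [heq, ← hL] at h
    nlinarith [h]
  have ne1 : S1.Nonempty := ⟨_, 0, ⟨le_refl 0, ht⟩, rfl⟩
  have ne2 : S2.Nonempty := ⟨_, 0, ⟨le_refl 0, hs⟩, rfl⟩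
  have bdd1 : BddAbove S1 := ⟨s * L, ub1⟩
  have bdd2 : BddAbove S2 := ⟨s * L, ub2⟩
  apply le_antisymm
  · -- s * L ≤ max: case split
    rcases le_or_gt s (t * c) with hcase | hcase
    · refine le_max_of_le_left ?_
      apply le_csSup bdd1
      refine ⟨t - s / c, ⟨by rw [sub_nonneg, div_le_iff₀ hcpos]; linarith, by
        have : 0 < s / c := by positivity
        linarith⟩, ?_⟩
      have hττ : t - (t - s / c) = s / c := by ring
      rw [hττ]
      have hEq : Lam s (s / c) lam =
          (s / c) * (lam ^ 2 / 2 + (μ - lam) * lam) + s * L := by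
        apply Lam_eq μ lam s (s / c) hlam hd hs (by positivity)
        field_simp
        exact hc
      rw [hEq]
      ring
    · refine le_max_of_le_right ?_
      apply le_csSup bdd2
      refine ⟨s - t * c, ⟨by nlinarith, by nlinarith [mul_pos ht hcpos]⟩, ?_⟩
      have hsu : s - (s - t * c) = t * c := by ring
      rw [hsu]
      have hEq : Lam (t * c) t lam =
          t * (lam ^ 2 / 2 + (μ - lam) * lam) + (t * c) * L := by
        apply Lam_eq μ lam (t * c) t hlam hd (by positivity) ht
        rw [hc]
      rw [hEq]
      ring
  · exact max_le (csSup_le ne1 ub1) (csSup_le ne2 ub2)
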